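/- Let A be an m×n real matrix, K ⊆ {1,…,n}, C > 1, and x ∈ ℝⁿ. Suppose that (i) for every w ∈ ℝⁿ with Aw = 0 one has ‖x_K + w_K‖₁ + (1/C)·‖w_K̄‖₁ ≥ ‖x_K‖₁, and (ii) κ ≥ 0 is a constant such that ‖w_K‖₁ ≤ κ·‖w_K̄‖₁ for every w ∈ ℝⁿ with Aw = 0. Then every ℓ1 minimizer x̂ for (A, x) satisfies ‖x − x̂‖₁ ≤ (2C(1+κ)/(C−1))·‖x_K̄‖₁. -/

import Mathlib

/-- The ℓ1 norm of a vector in ℝⁿ. -/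
noncomputable def l1 {n : ℕ} (x : Fin n → ℝ) : ℝ := ∑ i, |x i|

/-- The restriction of a vector to the coordinates in `K` (zero outside `K`). -/
def restr {n : ℕ} (K : Finset (Fin n)) (x : Fin n → ℝ) : Fin n → ℝ :=
  fun i => if i ∈ K then x i else 0

lemma l1_nonneg {n : ℕ} (x : Fin n → ℝ) : 0 ≤ l1 x :=
  Finset.sum_nonneg fun i _ => abs_nonneg _

lemma l1_neg {n : ℕ} (x : Fin n → ℝ) : l1 (-x) = l1 x := by
  simp [l1]

lemma l1_add_le {n : ℕ} (x y : Fin n → ℝ) : l1 (x + y) ≤ l1 x + l1 y := by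
  simp only [l1, ← Finset.sum_add_distrib]
  exact Finset.sum_le_sum fun i _ => abs_add_le _ _

lemma l1_rev {n : ℕ} (x y : Fin n → ℝ) : l1 y - l1 x ≤ l1 (x + y) := by
  have := l1_add_le (x + y) (-x)
  simp only [l1_neg] at this
  have h : (x + y) + (-x) = y := by ring
  rw [h] at this
  linarith

lemma restr_add {n : ℕ} (K : Finset (Fin n)) (x y : Fin n → ℝ) :
    restr K (x + y) = restr K x + restr K y := by
  funext i; simp only [restr, Pi.add_apply]; split <;> simp

lemma l1_split {n : ℕ} (K : Finset (Fin n)) (x : Fin n → ℝ) :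
    l1 x = l1 (restr K x) + l1 (restr Kᶜ x) := by
  have h1 : l1 (restr K x) = ∑ i ∈ K, |x i| := by
    rw [l1, ← Finset.sum_subset (Finset.subset_univ K)]
    · exact Finset.sum_congr rfl fun i hi => by simp [restr, hi]
    · intro i _ hi; simp [restr, hi]
  have h2 : l1 (restr Kᶜ x) = ∑ i ∈ Kᶜ, |x i| := by
    rw [l1, ← Finset.sum_subset (Finset.subset_univ Kᶜ)]
    · exact Finset.sum_congr rfl fun i hi => by simp [restr, hi]
    · intro i _ hi; simp [restr, hi]
  rw [h1, h2, l1, Finset.sum_add_sum_compl]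

theorem stmt_8 {m n : ℕ} (A : Matrix (Fin m) (Fin n) ℝ)
    (K : Finset (Fin n)) (C : ℝ) (hC : 1 < C) (x : Fin n → ℝ)
    (hcond : ∀ w : Fin n → ℝ, A.mulVec w = 0 →
      l1 (restr K x + restr K w) + (1 / C) * l1 (restr Kᶜ w) ≥ l1 (restr K x))
    (κ : ℝ) (hκ : 0 ≤ κ)
    (hκ2 : ∀ w : Fin n → ℝ, A.mulVec w = 0 →
      l1 (restr K w) ≤ κ * l1 (restr Kᶜ w)) :
    ∀ xh : Fin n → ℝ, A.mulVec xh = A.mulVec x →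
      (∀ z : Fin n → ℝ, A.mulVec z = A.mulVec x → l1 xh ≤ l1 z) →
      l1 (x - xh) ≤ (2 * C * (1 + κ) / (C - 1)) * l1 (restr Kᶜ x) := by
  intro xh hA hmin
  set w : Fin n → ℝ := xh - x with hw
  have hAw : A.mulVec w = 0 := by
    rw [hw, Matrix.mulVec_sub, hA, sub_self]
  have h1 := hcond w hAw
  have h2 := hκ2 w hAw
  have hle : l1 xh ≤ l1 x := hmin x rfl
  have hxh : xh = x + w := by rw [hw]; ring
  -- decompositions
  have hdx : l1 x = l1 (restr K x) + l1 (restr Kᶜ x) := l1_split K x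
  have hdxh : l1 xh = l1 (restr K x + restr K w) + l1 (restr Kᶜ x + restr Kᶜ w) := by
    rw [hxh, l1_split K (x + w), restr_add, restr_add]
  have hrev : l1 (restr Kᶜ w) - l1 (restr Kᶜ x) ≤ l1 (restr Kᶜ x + restr Kᶜ w) :=
    l1_rev _ _
  set a := l1 (restr Kᶜ w) with ha
  set b := l1 (restr Kᶜ x) with hb
  have ha0 : 0 ≤ a := l1_nonneg _
  have hb0 : 0 ≤ b := l1_nonneg _
  have hC0 : (0:ℝ) < C := by linarith
  have hC1 : (0:ℝ) < C - 1 := by linarith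
  -- key bound: (1 - 1/C) * a ≤ 2 * b
  have hkey : (1 - 1/C) * a ≤ 2 * b := by linarith
  have hkey2 : a * (C - 1) ≤ 2 * C * b := by
    have h3 : (1 - 1/C) * a * C ≤ 2 * b * C :=
      mul_le_mul_of_nonneg_right hkey (le_of_lt hC0)
    have h4 : (1 - 1/C) * a * C = a * (C - 1) := by
      field_simp
    linarith [h4 ▸ h3]
  have hxw : x - xh = -w := by rw [hw]; ring
  rw [hxw, l1_neg, l1_split K w]
  have hbound : l1 (restr K w) + a ≤ (1 + κ) * a := by linarith
  have hfin : (1 + κ) * a ≤ 2 * C * (1 + κ) / (C - 1) * b := by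
    rw [div_mul_eq_mul_div, le_div_iff₀ hC1]
    nlinarith
  linarith
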